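/- Let h:[r₀,∞)→(0,∞) be increasing with ∫_{r₀}^∞ dt/(t·h(t)) < ∞, and let s ≥ 1. Let (r_n)_{n≥0} be a sequence with r_{n+1} − r_n ≥ s for all n, and suppose there is m such that r_n ≥ n·h(n) for all n with r_n ≥ m. Then the union ⋃_{n≥0} [r_n, r_n+s] has finite logarithmic measure. -/

import Mathlib

set_option maxHeartbeats 800000


open Filter MeasureTheory Set

theorem stmt12 (r₀ : ℝ) (h : ℝ → ℝ) (hpos : ∀ x ≥ r₀, 0 < h x)
    (hmono : StrictMonoOn h (Ici r₀))
    (hint : IntegrableOn (fun t => (t * h t)⁻¹) (Ici r₀))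
    (s : ℝ) (hs : 1 ≤ s) (r : ℕ → ℝ) (hgap : ∀ n, s ≤ r (n + 1) - r n)
    (m : ℝ) (hm : ∀ n : ℕ, m ≤ r n → (n : ℝ) * h n ≤ r n) :
    ∫⁻ t in (⋃ n : ℕ, Icc (r n) (r n + s)) ∩ Ici (1:ℝ),
      ENNReal.ofReal t⁻¹ < ⊤ := by
  -- lower bound on r n
  have hr_lb : ∀ n : ℕ, r 0 + n ≤ r n := by
    intro n
    induction n with
    | zero => simp
    | succ k ih =>
      have h1 := hgap k
      push_cast
      linarith
  obtain ⟨N, hN⟩ := exists_nat_ge (max (max (r₀ + 1) 2) (max (m - r 0) (1 - r 0)))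
  have hN1 : r₀ + 1 ≤ N := le_trans (le_trans (le_max_left _ _) (le_max_left _ _)) hN
  have hN2 : (2:ℝ) ≤ N := le_trans (le_trans (le_max_right _ _) (le_max_left _ _)) hN
  have hNm : m - r 0 ≤ N := le_trans (le_trans (le_max_left _ _) (le_max_right _ _)) hN
  have hN3 : 1 - r 0 ≤ N := le_trans (le_trans (le_max_right _ _) (le_max_right _ _)) hN
  set f : ℕ → ENNReal := fun n => ENNReal.ofReal (max (r n) 1)⁻¹ * ENNReal.ofReal s with hf
  have hmax_pos : ∀ n, (0:ℝ) < max (r n) 1 := fun n =>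
    lt_of_lt_of_le one_pos (le_max_right _ _)
  -- bound the integral over each piece
  have hpiece : ∀ n : ℕ,
      ∫⁻ t in Icc (r n) (r n + s) ∩ Ici (1:ℝ), ENNReal.ofReal t⁻¹ ≤ f n := by
    intro n
    have h1 : ∫⁻ t in Icc (r n) (r n + s) ∩ Ici (1:ℝ), ENNReal.ofReal t⁻¹ ≤
        ∫⁻ _ in Icc (r n) (r n + s) ∩ Ici (1:ℝ), ENNReal.ofReal (max (r n) 1)⁻¹ := by
      apply setLIntegral_mono measurable_const
      intro t ht
      refine ENNReal.ofReal_le_ofReal ?_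
      have htge : max (r n) 1 ≤ t := max_le ht.1.1 ht.2
      exact inv_anti₀ (hmax_pos n) htge
    rw [setLIntegral_const] at h1
    refine h1.trans ?_
    refine mul_le_mul_right ?_ _
    calc volume (Icc (r n) (r n + s) ∩ Ici (1:ℝ)) ≤ volume (Icc (r n) (r n + s)) :=
          measure_mono inter_subset_left
      _ = ENNReal.ofReal (r n + s - r n) := Real.volume_Icc
      _ = ENNReal.ofReal s := by ring_nf
  -- the intervals for the integral comparison
  set S : ℕ → Set ℝ := fun i => Ico ((N:ℝ) + i) ((N:ℝ) + i + 1) with hS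
  set g : ℝ → ENNReal := fun t => ENNReal.ofReal (t * h t)⁻¹ with hg
  -- tail bound
  have htail : ∀ i : ℕ, f (i + (N + 1)) ≤ (∫⁻ t in S i, g t) * ENNReal.ofReal s := by
    intro i
    set n : ℕ := i + (N + 1) with hn
    have hncast : (n:ℝ) = (N:ℝ) + i + 1 := by rw [hn]; push_cast; ring
    have hNn : (N:ℝ) ≤ (n:ℝ) := by
      rw [hncast]
      have : (0:ℝ) ≤ i := Nat.cast_nonneg i
      linarith
    have hnat : N ≤ n := by omega
    have hrn_lb : r 0 + n ≤ r n := hr_lb n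
    have hmrn : m ≤ r n := by
      have : m - r 0 ≤ (n:ℝ) := le_trans hNm hNn
      linarith
    have hrn1 : (1:ℝ) ≤ r n := by
      have : 1 - r 0 ≤ (n:ℝ) := le_trans hN3 hNn
      linarith
    have hn_r₀ : r₀ ≤ (n:ℝ) := by linarith
    have hhn : 0 < h n := hpos _ hn_r₀
    have hn_pos : (0:ℝ) < (n:ℝ) := by linarith
    have hnh_pos : (0:ℝ) < (n:ℝ) * h n := mul_pos hn_pos hhn
    have hnh_le : (n:ℝ) * h n ≤ r n := hm n hmrn
    have hmax : max (r n) 1 = r n := max_eq_left hrn1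
    -- first: f n ≤ ofReal ((n * h n)⁻¹) * ofReal s
    have step1 : f n ≤ ENNReal.ofReal ((n:ℝ) * h n)⁻¹ * ENNReal.ofReal s := by
      rw [hf]
      refine mul_le_mul_left (ENNReal.ofReal_le_ofReal ?_) _
      rw [hmax]
      exact inv_anti₀ hnh_pos hnh_le
    refine step1.trans (mul_le_mul_left ?_ _)
    -- constant is below g on S i
    have hconst : ∫⁻ _ in S i, ENNReal.ofReal ((n:ℝ) * h n)⁻¹ =
        ENNReal.ofReal ((n:ℝ) * h n)⁻¹ := by
      rw [setLIntegral_const, hS]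
      simp only [Real.volume_Ico]
      rw [show (N:ℝ) + i + 1 - ((N:ℝ) + i) = 1 by ring]
      simp
    calc ENNReal.ofReal ((n:ℝ) * h n)⁻¹
        = ∫⁻ _ in S i, ENNReal.ofReal ((n:ℝ) * h n)⁻¹ := hconst.symm
      _ ≤ ∫⁻ t in S i, g t := by
          apply setLIntegral_mono' measurableSet_Ico
          intro t ht
          have ht1 : (N:ℝ) + i ≤ t := ht.1
          have ht2 : t < (N:ℝ) + i + 1 := ht.2
          have htr₀ : r₀ ≤ t := by
            have : (0:ℝ) ≤ i := Nat.cast_nonneg i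
            linarith
          have htpos : (0:ℝ) < t := by
            have : (0:ℝ) ≤ i := Nat.cast_nonneg i
            linarith
          have htn : t ≤ (n:ℝ) := by rw [hncast]; linarith
          have hht : 0 < h t := hpos _ htr₀
          have hht_le : h t ≤ h n := hmono.monotoneOn htr₀ hn_r₀ htn
          have hprod : t * h t ≤ (n:ℝ) * h n :=
            mul_le_mul htn hht_le hht.le hn_pos.le
          have hprod_pos : 0 < t * h t := mul_pos htpos hht
          exact ENNReal.ofReal_le_ofReal (inv_anti₀ hprod_pos hprod)
  -- total sum is finite
  have hsum : ∑' n, f n < ⊤ := by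
    rw [← Summable.sum_add_tsum_nat_add' (f := f) (k := N + 1) ENNReal.summable]
    apply ENNReal.add_lt_top.mpr
    constructor
    · exact ENNReal.sum_lt_top.mpr fun a _ =>
        ENNReal.mul_lt_top ENNReal.ofReal_lt_top ENNReal.ofReal_lt_top
    · have hdisj : Pairwise (Function.onFun Disjoint S) := by
        intro i j hij
        rw [Function.onFun, hS]
        simp only
        rw [Set.Ico_disjoint_Ico]
        rcases hij.lt_or_gt with hlt | hlt
        · have hcast : (i:ℝ) + 1 ≤ j := by exact_mod_cast hlt
          calc min ((N:ℝ) + i + 1) ((N:ℝ) + j + 1) ≤ (N:ℝ) + i + 1 := min_le_left _ _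
            _ ≤ (N:ℝ) + j := by linarith
            _ ≤ max ((N:ℝ) + i) ((N:ℝ) + j) := le_max_right _ _
        · have hcast : (j:ℝ) + 1 ≤ i := by exact_mod_cast hlt
          calc min ((N:ℝ) + i + 1) ((N:ℝ) + j + 1) ≤ (N:ℝ) + j + 1 := min_le_right _ _
            _ ≤ (N:ℝ) + i := by linarith
            _ ≤ max ((N:ℝ) + i) ((N:ℝ) + j) := le_max_left _ _
      have hmeas : ∀ i, MeasurableSet (S i) := fun i => measurableSet_Ico
      have hUsub : (⋃ i, S i) ⊆ Ici r₀ := by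
        refine iUnion_subset fun i t ht => ?_
        have h1 : (N:ℝ) + i ≤ t := ht.1
        have : (0:ℝ) ≤ i := Nat.cast_nonneg i
        simp only [mem_Ici]
        linarith
      calc ∑' i, f (i + (N + 1)) ≤ ∑' i, (∫⁻ t in S i, g t) * ENNReal.ofReal s :=
            ENNReal.tsum_le_tsum htail
        _ = (∑' i, ∫⁻ t in S i, g t) * ENNReal.ofReal s := ENNReal.tsum_mul_right
        _ = (∫⁻ t in ⋃ i, S i, g t) * ENNReal.ofReal s := by
            rw [lintegral_iUnion hmeas hdisj]
        _ ≤ (∫⁻ t in Ici r₀, g t) * ENNReal.ofReal s := by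
            exact mul_le_mul_left (lintegral_mono_set hUsub) _
        _ < ⊤ := by
            apply ENNReal.mul_lt_top ?_ ENNReal.ofReal_lt_top
            exact hint.lintegral_lt_top
  -- put it together
  calc ∫⁻ t in (⋃ n : ℕ, Icc (r n) (r n + s)) ∩ Ici (1:ℝ), ENNReal.ofReal t⁻¹
      = ∫⁻ t in ⋃ n : ℕ, (Icc (r n) (r n + s) ∩ Ici (1:ℝ)), ENNReal.ofReal t⁻¹ := by
        rw [iUnion_inter]
    _ ≤ ∑' n, ∫⁻ t in Icc (r n) (r n + s) ∩ Ici (1:ℝ), ENNReal.ofReal t⁻¹ :=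
        lintegral_iUnion_le _ _
    _ ≤ ∑' n, f n := ENNReal.tsum_le_tsum hpiece
    _ < ⊤ := hsum
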